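/- arXiv:0904.0333 — 3 statements merged into one kernel-verified Lean document; each statement's English description precedes it below -/
import Mathlib

section
/- Partial inversion of an invertible square matrix M with respect to all indices yields the inverse matrix: inv_V M = M⁻¹. -/
/-- Partial inversion of a square real matrix with respect to a single index `k`. -/
noncomputable def invStep {ι : Type*} [DecidableEq ι] (M : Matrix ι ι ℝ) (k : ι) : Matrix ι ι ℝ :=
  Matrix.of fun i j =>
    if i = k then (if j = k then 1 / M k k else - M k j / M k k)
    else if j = k then M i k / M k k
    else M i j - M i k * M k j / M k k

/-- Partial inversion with respect to a sequence of indices, applied in order. -/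
noncomputable def invList {ι : Type*} [DecidableEq ι] (l : List ι) (M : Matrix ι ι ℝ) : Matrix ι ι ℝ :=
  l.foldl invStep M

/-- All principal submatrices of `M` are invertible. -/
def allPrincipalInvertible {ι : Type*} [Fintype ι] [DecidableEq ι]
    (M : Matrix ι ι ℝ) : Prop :=
  ∀ s : Finset ι,
    (M.submatrix (fun i : s => (i : ι)) (fun i : s => (i : ι))).det ≠ 0

section SweepAux

open Matrix Finset

variable {ι : Type*} [Fintype ι] [DecidableEq ι]

/-- The key property of one sweep step: it exchanges the `k`-th coordinates of
input and output of the linear map. -/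
lemma invStep_mulVec (N : Matrix ι ι ℝ) (k : ι) (hk : N k k ≠ 0)
    (u v : ι → ℝ) (huv : N.mulVec u = v) :
    (invStep N k).mulVec (Function.update u k (v k)) = Function.update v k (u k) := by
  have hv : ∀ i, ∑ j, N i j * u j = v i := by
    intro i; rw [← huv]; rfl
  have hvi : ∀ i, ∑ j ∈ univ.erase k, N i j * u j = v i - N i k * u k := by
    intro i
    have h := hv i
    rw [← Finset.add_sum_erase univ (fun j => N i j * u j) (mem_univ k)] at h
    linarith
  funext i
  show ∑ j, invStep N k i j * Function.update u k (v k) j = _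
  rw [← Finset.add_sum_erase univ _ (mem_univ k)]
  have hupd : ∀ j ∈ univ.erase k, invStep N k i j * Function.update u k (v k) j
      = invStep N k i j * u j := by
    intro j hj
    rw [Function.update_of_ne (Finset.ne_of_mem_erase hj)]
  rw [Finset.sum_congr rfl hupd]
  by_cases hik : i = k
  · subst hik
    have h1 : ∀ j ∈ univ.erase i, invStep N i i j * u j = -(N i j * u j / N i i) := by
      intro j hj
      simp [invStep, Finset.ne_of_mem_erase hj]
      ring
    rw [Finset.sum_congr rfl h1, Function.update_self, Function.update_self,
      Finset.sum_neg_distrib, ← Finset.sum_div, hvi i]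
    simp only [invStep, Matrix.of_apply, if_pos rfl, eq_self_iff_true, if_true]
    field_simp
    ring
  · have h1 : ∀ j ∈ univ.erase k, invStep N k i j * u j
        = N i j * u j - N i k * (N k j * u j) / N k k := by
      intro j hj
      simp [invStep, hik, Finset.ne_of_mem_erase hj]
      ring
    rw [Finset.sum_congr rfl h1, Function.update_self, Function.update_of_ne hik,
      Finset.sum_sub_distrib]
    have h2 : ∑ j ∈ univ.erase k, N i k * (N k j * u j) / N k k
        = N i k * (∑ j ∈ univ.erase k, N k j * u j) / N k k := by
      rw [Finset.mul_sum, Finset.sum_div]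
    rw [h2, hvi i, hvi k]
    simp only [invStep, Matrix.of_apply, if_neg hik, if_pos rfl, eq_self_iff_true, if_true]
    field_simp
    ring

/-- The sweep invariant: after sweeping the indices in `S`, the matrix `N`
maps the vector formed from `x` and `M *ᵥ x` with coordinates exchanged on `S`
to the correspondingly exchanged output. -/
def Sweeps (M : Matrix ι ι ℝ) (S : Finset ι) (N : Matrix ι ι ℝ) : Prop :=
  ∀ x : ι → ℝ, N.mulVec (fun i => if i ∈ S then M.mulVec x i else x i)
      = fun i => if i ∈ S then x i else M.mulVec x i

/-- If `N` realizes the sweep of `M` on `S` and `k ∉ S`, the next pivot is nonzero. -/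
lemma pivot_ne_zero (M N : Matrix ι ι ℝ) (hM : allPrincipalInvertible M)
    (S : Finset ι) (hN : Sweeps M S N) (k : ι) (hk : k ∉ S) : N k k ≠ 0 := by
  classical
  set s : Finset ι := insert k S with hs
  set A : Matrix s s ℝ := M.submatrix (fun i : s => (i : ι)) (fun i : s => (i : ι)) with hA
  have hdet : A.det ≠ 0 := hM s
  haveI : Invertible A := A.invertibleOfIsUnitDet hdet.isUnit
  set e : s → ℝ := fun i => if (i : ι) = k then 1 else 0 with he
  set z : s → ℝ := A⁻¹.mulVec e with hz
  have hAz : A.mulVec z = e := by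
    rw [hz, Matrix.mulVec_mulVec, Matrix.mul_nonsing_inv A hdet.isUnit, Matrix.one_mulVec]
  set x : ι → ℝ := fun i => if h : i ∈ s then z ⟨i, h⟩ else 0 with hx
  have hMx : ∀ i (hi : i ∈ s), M.mulVec x i = (if i = k then 1 else 0) := by
    intro i hi
    have h1 : M.mulVec x i = ∑ j ∈ s, M i j * x j := by
      rw [Matrix.mulVec, dotProduct]
      rw [← Finset.sum_subset (Finset.subset_univ s)]
      intro j _ hj
      simp [hx, hj]
    have h2 : ∑ j ∈ s, M i j * x j = A.mulVec z ⟨i, hi⟩ := by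
      rw [Matrix.mulVec, dotProduct, ← Finset.sum_coe_sort s]
      apply Finset.sum_congr rfl
      intro j _
      simp [hx, hA, j.2]
    rw [h1, h2, hAz]
  have hxk : ∀ i, (if i ∈ S then M.mulVec x i else x i) = (Pi.single k (x k) : ι → ℝ) i := by
    intro i
    by_cases hiS : i ∈ S
    · have hik : i ≠ k := fun h => hk (h ▸ hiS)
      rw [if_pos hiS, hMx i (Finset.mem_insert_of_mem hiS), if_neg hik,
        Pi.single_apply, if_neg hik]
    · rw [if_neg hiS, Pi.single_apply]
      by_cases hik : i = k
      · subst hik; rw [if_pos rfl]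
      · rw [if_neg hik]
        have : i ∉ s := by simp [hs, hik, hiS]
        simp [hx, this]
  have hNx := hN x
  have hkk := congrFun hNx k
  rw [show (fun i => if i ∈ S then M.mulVec x i else x i)
      = (Pi.single k (x k) : ι → ℝ) from funext hxk] at hkk
  rw [Matrix.mulVec_single, Pi.smul_apply, Matrix.col_apply, op_smul_eq_mul] at hkk
  simp only [if_neg hk] at hkk
  rw [hMx k (Finset.mem_insert_self k S)] at hkk
  simp only [if_true] at hkk
  exact left_ne_zero_of_mul (by rw [hkk]; exact one_ne_zero)

/-- One sweep step extends the sweep invariant by one index. -/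
lemma sweeps_insert (M N : Matrix ι ι ℝ) (S : Finset ι) (hN : Sweeps M S N)
    (k : ι) (hk : k ∉ S) (hkk : N k k ≠ 0) :
    Sweeps M (insert k S) (invStep N k) := by
  intro x
  set u : ι → ℝ := fun i => if i ∈ S then M.mulVec x i else x i with hu
  set v : ι → ℝ := fun i => if i ∈ S then x i else M.mulVec x i with hv
  have huv : N.mulVec u = v := hN x
  have hstep := invStep_mulVec N k hkk u v huv
  have h1 : Function.update u k (v k) = fun i => if i ∈ insert k S then M.mulVec x i else x i := by
    funext i
    by_cases hik : i = k
    · subst hik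
      simp [hv, hk]
    · simp [Function.update_of_ne hik, hu, hik]
  have h2 : Function.update v k (u k) = fun i => if i ∈ insert k S then x i else M.mulVec x i := by
    funext i
    by_cases hik : i = k
    · subst hik
      simp [hu, hk]
    · simp [Function.update_of_ne hik, hv, hik]
  rw [h1, h2] at hstep
  exact hstep

/-- Sweeping along a duplicate-free list disjoint from `S` extends the invariant. -/
lemma sweeps_foldl (M : Matrix ι ι ℝ) (hM : allPrincipalInvertible M) :
    ∀ (l : List ι) (S : Finset ι) (N : Matrix ι ι ℝ), l.Nodup → (∀ a ∈ l, a ∉ S) →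
      Sweeps M S N → Sweeps M (S ∪ l.toFinset) (l.foldl invStep N) := by
  intro l
  induction l with
  | nil => intro S N _ _ h; simpa using h
  | cons k t ih =>
    intro S N hnd hdisj hN
    have hk : k ∉ S := hdisj k List.mem_cons_self
    have hkk : N k k ≠ 0 := pivot_ne_zero M N hM S hN k hk
    have h1 : Sweeps M (insert k S) (invStep N k) := sweeps_insert M N S hN k hk hkk
    have h2 := ih (insert k S) (invStep N k) (List.Nodup.of_cons hnd)
      (fun a ha => by
        rw [Finset.mem_insert]
        push_neg
        exact ⟨fun h => (List.nodup_cons.mp hnd).1 (h ▸ ha),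
          hdisj a (List.mem_cons_of_mem k ha)⟩) h1
    have h3 : insert k S ∪ t.toFinset = S ∪ (k :: t).toFinset := by
      ext i
      simp [Finset.mem_insert, Finset.mem_union, or_assoc, or_comm, or_left_comm]
    rw [h3] at h2
    exact h2

end SweepAux

/-- partial inversion with respect to all indices gives the inverse matrix. -/
theorem invList_univ {ι : Type*} [Fintype ι] [DecidableEq ι]
    (M : Matrix ι ι ℝ) (hM : allPrincipalInvertible M)
    (l : List ι) (hnl : l.Nodup) (hall : ∀ i : ι, i ∈ l) :
    invList l M = M⁻¹ := by
  have hbase : Sweeps M ∅ M := by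
    intro x; funext i; simp
  have h := sweeps_foldl M hM l ∅ M hnl (by simp) hbase
  have hun : (∅ : Finset ι) ∪ l.toFinset = Finset.univ := by
    ext i; simp [hall i]
  rw [hun] at h
  have hNM : (l.foldl invStep M) * M = 1 := by
    apply Matrix.ext
    intro i j
    have hthis := congrFun (h (Pi.single j 1)) i
    simp only [Finset.mem_univ, if_true] at hthis
    calc (l.foldl invStep M * M) i j
        = ((l.foldl invStep M * M).mulVec (Pi.single j 1 : ι → ℝ)) i := by
          rw [Matrix.mulVec_single]; simp
      _ = ((l.foldl invStep M).mulVec (M.mulVec (Pi.single j 1 : ι → ℝ))) i := by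
          rw [← Matrix.mulVec_mulVec]
      _ = (Pi.single j 1 : ι → ℝ) i := hthis
      _ = (1 : Matrix ι ι ℝ) i j := by simp [Matrix.one_apply, Pi.single_apply, eq_comm]
  show l.foldl invStep M = M⁻¹
  exact (Matrix.inv_eq_left_inv hNM).symm
end

section
/- Decomposition for linear independencies: for a positive definite matrix Σ partitioned by disjoint sets a, b, c, d, if Π_{a|bc.d} = 0 then Π_{a|b.d} = 0. -/
variable {n : ℕ}

/-- The submatrix (block) of `S` with rows `x` and columns `y`. -/
def blk (S : Matrix (Fin n) (Fin n) ℝ) (x y : Finset (Fin n)) : Matrix x y ℝ :=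
  Matrix.of fun i j => S i j

/-- The conditional covariance block `Σ_{xy|z} = Σ_{xy} − Σ_{xz} Σ_{zz}⁻¹ Σ_{zy}`. -/
noncomputable def condCov (S : Matrix (Fin n) (Fin n) ℝ) (x y z : Finset (Fin n)) :
    Matrix x y ℝ :=
  blk S x y - blk S x z * (blk S z z)⁻¹ * blk S z y

/-- The partial regression coefficient matrix `Π_{x|y.z} = Σ_{xy|z} Σ_{yy|z}⁻¹`. -/
noncomputable def regCoef (S : Matrix (Fin n) (Fin n) ℝ) (x y z : Finset (Fin n)) :
    Matrix x y ℝ :=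
  condCov S x y z * (condCov S y y z)⁻¹



open Matrix in
/-- A submatrix of a positive definite real matrix along an injective map is positive definite. -/
lemma posDef_submatrix_of_injective {m : Type*} [Fintype m] [DecidableEq m]
    {S : Matrix (Fin n) (Fin n) ℝ} (hS : S.PosDef) (e : m → Fin n)
    (he : Function.Injective e) : (S.submatrix e e).PosDef := by
  refine Matrix.PosDef.of_dotProduct_mulVec_pos (hS.1.submatrix e) (fun x hx => ?_)
  classical
  set y : Fin n → ℝ := Function.extend e x 0 with hy
  have hye : ∀ i, y (e i) = x i := fun i => he.extend_apply x 0 i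
  have key : ∀ c : Fin n → ℝ, ∑ j, y j * c j = ∑ i, x i * c (e i) := by
    intro c
    have h1 : ∑ j ∈ Finset.univ.map ⟨e, he⟩, y j * c j = ∑ j, y j * c j := by
      apply Finset.sum_subset (Finset.subset_univ _)
      intro j _ hj
      have hb : ¬∃ i, e i = j := by
        rintro ⟨i, rfl⟩
        exact hj (Finset.mem_map.mpr ⟨i, Finset.mem_univ _, rfl⟩)
      have : y j = 0 := by
        exact Function.extend_apply' x (fun _ : Fin n => (0:ℝ)) j hb
      simp [this]
    rw [← h1, Finset.sum_map]
    simp [hye]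
  have hy0 : y ≠ 0 := by
    intro h0
    apply hx
    funext i
    have := congrFun h0 (e i)
    simpa [hye i] using this
  have hpos := hS.dotProduct_mulVec_pos hy0
  have hcalc : star y ⬝ᵥ S *ᵥ y = star x ⬝ᵥ (S.submatrix e e) *ᵥ x := by
    simp only [dotProduct, mulVec, dotProduct, Pi.star_apply, star_trivial,
      submatrix_apply, id_eq]
    rw [key (fun j => ∑ j', S j j' * y j')]
    congr 1
    funext i
    congr 1
    rw [show ∑ j', S (e i) j' * y j' = ∑ j', y j' * S (e i) j' by
      simp [mul_comm], key (fun j' => S (e i) j')]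
    congr 1
    funext i'
    ring
  rw [hcalc] at hpos
  exact hpos

lemma disjoint_elim_injective {y d : Finset (Fin n)} (hyd : Disjoint y d) :
    Function.Injective (Sum.elim (fun i : y => (i : Fin n)) (fun i : d => (i : Fin n))) := by
  rintro (i | i) (j | j) hij <;> simp only [Sum.elim_inl, Sum.elim_inr] at hij
  · exact congrArg Sum.inl (Subtype.ext hij)
  · exact absurd (hyd.forall_ne_finset i.2 j.2) (by simp [hij])
  · exact absurd (hyd.forall_ne_finset j.2 i.2) (by simp [hij])
  · exact congrArg Sum.inr (Subtype.ext hij)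

open Matrix in
/-- The conditional covariance of a positive definite matrix is positive definite. -/
lemma condCov_posDef {S : Matrix (Fin n) (Fin n) ℝ} (hS : S.PosDef)
    (y d : Finset (Fin n)) (hyd : Disjoint y d) : (condCov S y y d).PosDef := by
  classical
  have hdd : (blk S d d).PosDef :=
    posDef_submatrix_of_injective hS (fun i : d => (i : Fin n)) Subtype.coe_injective
  haveI : Invertible (blk S d d) :=
    Matrix.invertibleOfIsUnitDet _ (isUnit_iff_ne_zero.mpr hdd.det_pos.ne')
  have hsub : (S.submatrix (Sum.elim (fun i : d => (i : Fin n)) (fun i : y => (i : Fin n)))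
      (Sum.elim (fun i : d => (i : Fin n)) (fun i : y => (i : Fin n)))).PosDef :=
    posDef_submatrix_of_injective hS _ (disjoint_elim_injective hyd.symm)
  have hBH : (blk S d y)ᴴ = blk S y d := by
    ext i j
    have := congrFun (congrFun hS.1 (i : Fin n)) (j : Fin n)
    simpa [blk, conjTranspose_apply] using this
  have hblock : S.submatrix (Sum.elim (fun i : d => (i : Fin n)) (fun i : y => (i : Fin n)))
      (Sum.elim (fun i : d => (i : Fin n)) (fun i : y => (i : Fin n))) =
      fromBlocks (blk S d d) (blk S d y) (blk S d y)ᴴ (blk S y y) := by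
    rw [hBH]
    ext (i | i) (j | j) <;> rfl
  rw [hblock] at hsub
  have hcc : condCov S y y d = blk S y y - (blk S d y)ᴴ * (blk S d d)⁻¹ * blk S d y := by
    rw [hBH, condCov]
  refine Matrix.PosDef.of_dotProduct_mulVec_pos ?_ ?_
  · rw [hcc]
    exact ((hS.1.submatrix _ : (blk S y y).IsHermitian).sub
      (isHermitian_conjTranspose_mul_mul _ (hdd.1.inv)))
  · intro x hx
    have hv : (-(((blk S d d)⁻¹ * blk S d y) *ᵥ x) ⊕ᵥ x) ≠ 0 := by
      intro h0
      apply hx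
      funext i
      exact congrFun h0 (Sum.inr i)
    have := hsub.dotProduct_mulVec_pos hv
    rwa [dotProduct_mulVec, schur_complement_eq₁₁ (blk S d y) (blk S y y) _ _ hdd.1,
      neg_add_cancel, dotProduct_zero, zero_add, ← dotProduct_mulVec, ← hcc] at this

/-- decomposition, `Π_{a|bc.d} = 0` implies `Π_{a|b.d} = 0`. -/
theorem regCoef_decomposition (S : Matrix (Fin n) (Fin n) ℝ) (hS : S.PosDef)
    (a b c d : Finset (Fin n))
    (hab : Disjoint a b) (hac : Disjoint a c) (had : Disjoint a d)
    (hbc : Disjoint b c) (hbd : Disjoint b d) (hcd : Disjoint c d)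
    (h : regCoef S a (b ∪ c) d = 0) :
    regCoef S a b d = 0 := by
  
  classical
  have hyd : Disjoint (b ∪ c) d := Finset.disjoint_union_left.mpr ⟨hbd, hcd⟩
  have hpd : (condCov S (b ∪ c) (b ∪ c) d).PosDef := condCov_posDef hS _ _ hyd
  have hdet : IsUnit (condCov S (b ∪ c) (b ∪ c) d).det :=
    isUnit_iff_ne_zero.mpr hpd.det_pos.ne'
  have h' : condCov S a (b ∪ c) d = 0 := by
    have := congrArg (fun M => M * condCov S (b ∪ c) (b ∪ c) d) h
    simpa [regCoef, Matrix.mul_assoc, Matrix.nonsing_inv_mul _ hdet] using this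
  have hab0 : condCov S a b d = 0 := by
    ext i j
    have := congrFun (congrFun h' i) ⟨(j : Fin n), Finset.mem_union_left c j.2⟩
    simpa [condCov, blk, Matrix.sub_apply, Matrix.mul_apply] using this
  rw [regCoef, hab0, Matrix.zero_mul]
end

section
/- Intersection for linear independencies: for a positive definite matrix Σ partitioned by disjoint sets a, b, c, d, if Π_{a|b.cd} = 0 and Π_{a|c.bd} = 0 then Π_{a|bc.d} = 0. -/
variable {n : ℕ}

open Matrix

lemma blk_conjTranspose {S : Matrix (Fin n) (Fin n) ℝ} (hS : S.IsHermitian)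
    (x y : Finset (Fin n)) : (blk S x y)ᴴ = blk S y x := by
  ext i j
  simpa [blk] using (hS.apply i j)

lemma posDef_blk {S : Matrix (Fin n) (Fin n) ℝ} (hS : S.PosDef) (x : Finset (Fin n)) :
    (blk S x x).PosDef := by
  classical
  refine PosDef.of_dotProduct_mulVec_pos (blk_conjTranspose hS.1 x x) fun v hv => ?_
  set w : Fin n → ℝ := fun i => if h : i ∈ x then v ⟨i, h⟩ else 0 with hw
  have hwne : w ≠ 0 := by
    intro h0
    apply hv
    funext i
    have := congrFun h0 i.val
    simpa [hw, i.2] using this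
  have key : ∀ f : Fin n → ℝ, ∑ i, w i * f i = ∑ i ∈ x.attach, v i * f i.val := by
    intro f
    have h1 : ∑ i ∈ x.attach, v i * f i.val = ∑ i ∈ x.attach, w i.val * f i.val := by
      refine Finset.sum_congr rfl fun i _ => ?_
      simp [hw, i.2]
    rw [h1, Finset.sum_attach x (fun i => w i * f i),
      ← Finset.sum_subset (Finset.subset_univ x)]
    intro i _ hi
    simp [hw, hi]
  have hq := hS.dotProduct_mulVec_pos hwne
  have expand : star w ⬝ᵥ S *ᵥ w = star v ⬝ᵥ (blk S x x) *ᵥ v := by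
    have inner : ∀ i : Fin n, (S *ᵥ w) i = ∑ j ∈ x.attach, S i j.val * v j := by
      intro i
      simp only [mulVec, dotProduct]
      have := key (fun j => S i j)
      calc ∑ j, S i j * w j = ∑ j, w j * S i j := by simp [mul_comm]
        _ = ∑ j ∈ x.attach, v j * S i j.val := key _
        _ = ∑ j ∈ x.attach, S i j.val * v j := by simp [mul_comm]
    calc star w ⬝ᵥ S *ᵥ w = ∑ i, w i * (S *ᵥ w) i := by simp [dotProduct]
      _ = ∑ i ∈ x.attach, v i * (S *ᵥ w) i.val := key _
      _ = ∑ i ∈ x.attach, v i * ∑ j ∈ x.attach, S i.val j.val * v j := by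
          simp only [inner]
      _ = star v ⬝ᵥ (blk S x x) *ᵥ v := by
          simp [dotProduct, mulVec, blk, Finset.sum_attach]
  rw [← expand]; exact hq


/-- PosDef is preserved by reindexing along an equiv. -/
lemma posDef_submatrix_equiv {m l : Type*} [Fintype m] [DecidableEq m] [Fintype l] [DecidableEq l]
    {M : Matrix m m ℝ} (hM : M.PosDef) (e : l ≃ m) : (M.submatrix e e).PosDef := by
  refine PosDef.of_dotProduct_mulVec_pos ?_ fun v hv => ?_
  · have := hM.1
    ext i j
    simpa using this.apply (e i) (e j)
  · have hv' : v ∘ e.symm ≠ 0 := by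
      intro h0; apply hv; funext i
      simpa using congrFun h0 (e i)
    have := hM.dotProduct_mulVec_pos hv'
    convert this using 1
    rw [submatrix_mulVec_equiv]
    simp only [star_trivial]
    simp only [dotProduct]
    exact Fintype.sum_equiv e (fun i => v i * ((M *ᵥ v ∘ ⇑e.symm) ∘ ⇑e) i)
      (fun i => (v ∘ ⇑e.symm) i * (M *ᵥ v ∘ ⇑e.symm) i) (fun i => by simp)

section union
variable (S : Matrix (Fin n) (Fin n) ℝ) {u v : Finset (Fin n)} (huv : Disjoint u v)

/-- `blk` over a disjoint union as a block matrix. -/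
lemma blk_union_union :
    (blk S (u ∪ v) (u ∪ v)).submatrix (Equiv.Finset.union u v huv) (Equiv.Finset.union u v huv)
      = fromBlocks (blk S u u) (blk S u v) (blk S v u) (blk S v v) := by
  ext p q
  cases p <;> cases q <;> rfl

lemma blk_row_union (x : Finset (Fin n)) :
    (blk S x (u ∪ v)).submatrix id (Equiv.Finset.union u v huv)
      = fromCols (blk S x u) (blk S x v) := by
  ext p q
  cases q <;> rfl

lemma blk_col_union (y : Finset (Fin n)) :
    (blk S (u ∪ v) y).submatrix (Equiv.Finset.union u v huv) id
      = fromRows (blk S u y) (blk S v y) := by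
  ext p q
  cases p <;> rfl

end union

noncomputable def invertibleOfPosDef {m : Type*} [Fintype m] [DecidableEq m]
    {M : Matrix m m ℝ} (h : M.PosDef) : Invertible M :=
  M.invertibleOfIsUnitDet (isUnit_iff_ne_zero.mpr h.det_pos.ne')

/-- The conditional covariance `Σ_{xx|z}` of a positive definite matrix is positive definite. -/
lemma posDef_condCov {S : Matrix (Fin n) (Fin n) ℝ} (hS : S.PosDef)
    {x z : Finset (Fin n)} (hxz : Disjoint x z) : (condCov S x x z).PosDef := by
  classical
  set e := Equiv.Finset.union x z hxz
  have hFB : (fromBlocks (blk S x x) (blk S x z) (blk S z x) (blk S z z)).PosDef := by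
    rw [← blk_union_union S hxz]
    exact posDef_submatrix_equiv (posDef_blk hS _) e
  have hzz : (blk S z z).PosDef := posDef_blk hS z
  haveI : Invertible (blk S z z) := invertibleOfPosDef hzz
  have hherm : (condCov S x x z).IsHermitian := by
    unfold condCov
    have h1 : (blk S x z)ᴴ = blk S z x := blk_conjTranspose hS.1 x z
    have h2 : (blk S z x)ᴴ = blk S x z := blk_conjTranspose hS.1 z x
    unfold IsHermitian
    rw [conjTranspose_sub, conjTranspose_mul, conjTranspose_mul, h2,
      conjTranspose_nonsing_inv, (blk_conjTranspose hS.1 z z : (blk S z z)ᴴ = _), h1,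
      blk_conjTranspose hS.1 x x, Matrix.mul_assoc]
  refine PosDef.of_dotProduct_mulVec_pos hherm fun w hw => ?_
  set y : z → ℝ := -(((blk S z z)⁻¹ * blk S z x) *ᵥ w) with hy
  have hBH : (blk S x z)ᴴ = blk S z x := blk_conjTranspose hS.1 x z
  have key := schur_complement_eq₂₂ (blk S x x) (blk S x z) w y hzz.1
  rw [hBH] at key
  have hzero : ((blk S z z)⁻¹ * blk S z x) *ᵥ w + y = 0 := by
    simp [hy]
  rw [hzero] at key
  simp only [star_trivial, zero_dotProduct, vecMul_zero, zero_dotProduct, zero_add] at key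
  have hpos := hFB.dotProduct_mulVec_pos (x := Sum.elim w y) (by
    intro h0
    apply hw
    funext i
    simpa using congrFun h0 (Sum.inl i))
  rw [star_trivial, dotProduct_mulVec, key] at hpos
  simpa [condCov, dotProduct_mulVec] using hpos

set_option maxHeartbeats 1200000 in
/-- Iterated conditioning: conditioning on `u ∪ v` equals conditioning on `v` and
then on `u`. -/
lemma condCov_union {S : Matrix (Fin n) (Fin n) ℝ} (hS : S.PosDef)
    {u v : Finset (Fin n)} (huv : Disjoint u v) (x y : Finset (Fin n)) :
    condCov S x y (u ∪ v) =
      condCov S x y v - condCov S x u v * (condCov S u u v)⁻¹ * condCov S u y v := by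
  classical
  set e := Equiv.Finset.union u v huv
  set A := blk S u u; set B := blk S u v; set C := blk S v u; set D := blk S v v
  haveI hDinv : Invertible D := invertibleOfPosDef (posDef_blk hS v)
  have hDinv_eq : ⅟D = D⁻¹ := invOf_eq_nonsing_inv D
  have hK : A - B * ⅟D * C = condCov S u u v := by
    rw [hDinv_eq]; rfl
  haveI hKinv : Invertible (A - B * ⅟D * C) := by
    rw [hK]; exact invertibleOfPosDef (posDef_condCov hS huv)
  haveI hFBinv : Invertible (fromBlocks A B C D) :=
    Matrix.fromBlocks₂₂Invertible A B C D
  -- identify the blocks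
  have hM : blk S (u ∪ v) (u ∪ v) = (fromBlocks A B C D).submatrix e.symm e.symm := by
    rw [← blk_union_union S huv]
    simp [e, Matrix.submatrix_submatrix]
  have hR : blk S x (u ∪ v) = (fromCols (blk S x u) (blk S x v)).submatrix id e.symm := by
    rw [← blk_row_union S huv x]
    simp [e, Matrix.submatrix_submatrix]
  have hC : blk S (u ∪ v) y = (fromRows (blk S u y) (blk S v y)).submatrix e.symm id := by
    rw [← blk_col_union S huv y]
    simp [e, Matrix.submatrix_submatrix]
  have hMinv : (blk S (u ∪ v) (u ∪ v))⁻¹ = (fromBlocks A B C D)⁻¹.submatrix e.symm e.symm := by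
    rw [hM, Matrix.inv_submatrix_equiv]
  have hFBinv_eq : (fromBlocks A B C D)⁻¹ =
      fromBlocks (⅟(A - B * ⅟D * C)) (-(⅟(A - B * ⅟D * C) * B * ⅟D))
        (-(⅟D * C * ⅟(A - B * ⅟D * C))) (⅟D + ⅟D * C * ⅟(A - B * ⅟D * C) * B * ⅟D) := by
    rw [← invOf_eq_nonsing_inv]
    exact Matrix.invOf_fromBlocks₂₂_eq A B C D
  set K := condCov S u u v
  have hprod : blk S x (u ∪ v) * (blk S (u ∪ v) (u ∪ v))⁻¹ * blk S (u ∪ v) y =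
      fromCols (blk S x u) (blk S x v) * (fromBlocks A B C D)⁻¹ *
        fromRows (blk S u y) (blk S v y) := by
    rw [hR, hMinv, hC, Matrix.submatrix_mul_equiv, Matrix.submatrix_mul_equiv]
    rfl
  have hKi : ⅟(A - B * ⅟D * C) = K⁻¹ := by
    rw [invOf_eq_nonsing_inv, hK]
  rw [condCov, hprod, hFBinv_eq, hKi, hDinv_eq, fromCols_mul_fromBlocks, fromCols_mul_fromRows]
  simp only [condCov]
  simp only [Matrix.sub_mul, Matrix.mul_sub, Matrix.add_mul, Matrix.mul_add,
    Matrix.neg_mul, Matrix.mul_neg, Matrix.mul_assoc]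
  abel

lemma condCov_eq_zero_of_regCoef {S : Matrix (Fin n) (Fin n) ℝ} (hS : S.PosDef)
    {x y z : Finset (Fin n)} (hyz : Disjoint y z) (h : regCoef S x y z = 0) :
    condCov S x y z = 0 := by
  have hdet : IsUnit (condCov S y y z).det :=
    isUnit_iff_ne_zero.mpr (posDef_condCov hS hyz).det_pos.ne'
  calc condCov S x y z
      = condCov S x y z * (condCov S y y z)⁻¹ * condCov S y y z := by
        rw [Matrix.mul_assoc, Matrix.nonsing_inv_mul _ hdet, Matrix.mul_one]
    _ = 0 := by rw [← regCoef, h, Matrix.zero_mul]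

lemma condCov_apply_val {S : Matrix (Fin n) (Fin n) ℝ} {x y y' z : Finset (Fin n)}
    (i : x) (j : y) (j' : y') (h : (j : Fin n) = j') :
    condCov S x y z i j = condCov S x y' z i j' := by
  simp only [condCov, Matrix.sub_apply, Matrix.mul_apply, blk, Matrix.of_apply, h]


/-- intersection, `Π_{a|b.cd} = 0` and `Π_{a|c.bd} = 0` imply
`Π_{a|bc.d} = 0`. -/
theorem regCoef_intersection (S : Matrix (Fin n) (Fin n) ℝ) (hS : S.PosDef)
    (a b c d : Finset (Fin n))
    (hab : Disjoint a b) (hac : Disjoint a c) (had : Disjoint a d)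
    (hbc : Disjoint b c) (hbd : Disjoint b d) (hcd : Disjoint c d)
    (h1 : regCoef S a b (c ∪ d) = 0) (h2 : regCoef S a c (b ∪ d) = 0) :
    regCoef S a (b ∪ c) d = 0 := by
  classical
  have hbcd : Disjoint b (c ∪ d) := Finset.disjoint_union_right.mpr ⟨hbc, hbd⟩
  have hcbd : Disjoint c (b ∪ d) := Finset.disjoint_union_right.mpr ⟨hbc.symm, hcd⟩
  have hC1 : condCov S a b (c ∪ d) = 0 := condCov_eq_zero_of_regCoef hS hbcd h1
  have hC2 : condCov S a c (b ∪ d) = 0 := condCov_eq_zero_of_regCoef hS hcbd h2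
  rw [condCov_union hS hcd a b, sub_eq_zero] at hC1
  rw [condCov_union hS hbd a c, sub_eq_zero] at hC2
  set P := condCov S a b d with hP
  set Q := condCov S a c d with hQ
  set K := condCov S c c d with hKdef
  set L := condCov S b b d with hLdef
  -- hC1 : P = Q * K⁻¹ * condCov S c b d
  -- hC2 : Q = P * L⁻¹ * condCov S b c d
  have hLpd : L.PosDef := posDef_condCov hS hbd
  have hLdet : IsUnit L.det := isUnit_iff_ne_zero.mpr hLpd.det_pos.ne'
  have hW : condCov S b b (c ∪ d)
      = L - condCov S b c d * K⁻¹ * condCov S c b d := condCov_union hS hcd b b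
  have hWpd : (condCov S b b (c ∪ d)).PosDef := posDef_condCov hS hbcd
  have hWdet : IsUnit (condCov S b b (c ∪ d)).det :=
    isUnit_iff_ne_zero.mpr hWpd.det_pos.ne'
  -- substitute to get P * (L⁻¹ * (L - Cbc K⁻¹ Ccb)) = 0
  have hPzero : P = 0 := by
    have hsub : P = P * L⁻¹ * (condCov S b c d * K⁻¹ * condCov S c b d) := by
      calc P = Q * K⁻¹ * condCov S c b d := hC1
        _ = P * L⁻¹ * condCov S b c d * K⁻¹ * condCov S c b d := by rw [← hC2]
        _ = P * L⁻¹ * (condCov S b c d * K⁻¹ * condCov S c b d) := by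
            simp [Matrix.mul_assoc]
    have hsub' : P = P * (L⁻¹ * (condCov S b c d * K⁻¹ * condCov S c b d)) :=
      hsub.trans (Matrix.mul_assoc P L⁻¹ _)
    have key : P * (L⁻¹ * condCov S b b (c ∪ d)) = 0 := by
      rw [hW, Matrix.mul_sub, Matrix.mul_sub, Matrix.nonsing_inv_mul _ hLdet,
        Matrix.mul_one, sub_eq_zero]
      exact hsub'
    have : P * (L⁻¹ * condCov S b b (c ∪ d))
        * ((condCov S b b (c ∪ d))⁻¹ * L) = P := by
      calc P * (L⁻¹ * condCov S b b (c ∪ d)) * ((condCov S b b (c ∪ d))⁻¹ * L)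
          = P * (L⁻¹ * (condCov S b b (c ∪ d) * (condCov S b b (c ∪ d))⁻¹) * L) := by
            simp [Matrix.mul_assoc]
        _ = P := by
            rw [Matrix.mul_nonsing_inv _ hWdet, Matrix.mul_one,
              Matrix.nonsing_inv_mul _ hLdet, Matrix.mul_one]
    rw [key, Matrix.zero_mul] at this
    exact this.symm
  have hQzero : Q = 0 := by
    rw [hC2, hPzero, Matrix.zero_mul, Matrix.zero_mul]
  have hCbc : condCov S a (b ∪ c) d = 0 := by
    ext i j
    rcases Finset.mem_union.mp j.2 with hj | hj
    · have := condCov_apply_val (S := S) (z := d) i j ⟨(j : Fin n), hj⟩ rfl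
      rw [this]
      have := congrFun (congrFun hPzero i) ⟨(j : Fin n), hj⟩
      simpa using this
    · have := condCov_apply_val (S := S) (z := d) i j ⟨(j : Fin n), hj⟩ rfl
      rw [this]
      have := congrFun (congrFun hQzero i) ⟨(j : Fin n), hj⟩
      simpa using this
  rw [regCoef, hCbc, Matrix.zero_mul]
end
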